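/- arXiv:1810.11485 — 4 statements merged into one kernel-verified Lean document; each statement's English description precedes it below -/
import Mathlib

section
/- Let (S,𝔖,μ) and (T,𝔗,ν) be measure spaces over σ-rings. Then 𝔖^σ ⊗ 𝔗^σ = σ({A × B : μ(A) < ∞, ν(B) < ∞}), where 𝔖^σ, 𝔗^σ are the σ-rings of σ-finite sets of μ and ν, and 𝔖^σ ⊗ 𝔗^σ denotes the product σ-ring. -/
open Set ENNReal

/-- A family of sets is a σ-ring if it contains `∅` and is closed under
set differences and countable unions. -/
def IsSigmaRing {α : Type*} (C : Set (Set α)) : Prop :=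
  ∅ ∈ C ∧ (∀ A B : Set α, A ∈ C → B ∈ C → A \ B ∈ C) ∧
    ∀ f : ℕ → Set α, (∀ n, f n ∈ C) → (⋃ n, f n) ∈ C

/-- The σ-ring generated by a family of sets. -/
def genSR {α : Type*} (D : Set (Set α)) : Set (Set α) :=
  ⋂₀ {C | IsSigmaRing C ∧ D ⊆ C}

/-- A measure on a σ-ring: countably additive, vanishing on `∅`. -/
def IsMeasure {α : Type*} (C : Set (Set α)) (μ : Set α → ℝ≥0∞) : Prop :=
  μ ∅ = 0 ∧ ∀ f : ℕ → Set α, (∀ n, f n ∈ C) →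
    Pairwise (Function.onFun Disjoint f) → μ (⋃ n, f n) = ∑' n, μ (f n)

/-- The family of μ-σ-finite sets: countable unions of sets of finite measure. -/
def sigmaFin {α : Type*} (C : Set (Set α)) (μ : Set α → ℝ≥0∞) : Set (Set α) :=
  {A | ∃ g : ℕ → Set α, (∀ n, g n ∈ C ∧ μ (g n) < ⊤) ∧ A = ⋃ n, g n}

/-- Restriction of a family of sets to a set `S`. -/
def restrictFam {α : Type*} (D : Set (Set α)) (S : Set α) : Set (Set α) :=
  (fun A => A ∩ S) '' D

/-- The product σ-ring, generated by measurable rectangles. -/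
def prodSR {α β : Type*} (S : Set (Set α)) (T : Set (Set β)) : Set (Set (α × β)) :=
  genSR {R | ∃ A ∈ S, ∃ B ∈ T, R = A ×ˢ B}

/-- The σ-algebra generated by a family of sets. -/
def genSA {α : Type*} (D : Set (Set α)) : MeasurableSpace α :=
  MeasurableSpace.generateFrom D

/-- The (extended) Lebesgue integral of a nonnegative function with respect to a
measure on a σ-ring, as the supremum of integrals of simple functions below it. -/
noncomputable def lintSR {α : Type*} (C : Set (Set α)) (μ : Set α → ℝ≥0∞)
    (f : α → ℝ≥0∞) : ℝ≥0∞ :=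
  ⨆ (n : ℕ) (c : Fin n → ℝ≥0∞) (A : Fin n → Set α) (_ : ∀ i, A i ∈ C)
    (_ : ∀ x, (∑ i, (A i).indicator (fun _ => c i) x) ≤ f x),
    ∑ i, c i * μ (A i)

/-- The positive part of an extended real, as an `ℝ≥0∞`. -/
noncomputable def epos (x : EReal) : ℝ≥0∞ := (x ⊔ 0).abs

/-- Measurability of an extended-real function with respect to a σ-ring:
measurable for the generated σ-algebra, with support in the σ-ring. -/
def SRMeasurableE {α : Type*} (C : Set (Set α)) (f : α → EReal) : Prop :=
  @Measurable α EReal (genSA C) _ f ∧ {x | f x ≠ 0} ∈ C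

/-- The Lebesgue integral of an extended-real function w.r.t. a measure on a σ-ring. -/
noncomputable def integralE {α : Type*} (C : Set (Set α)) (μ : Set α → ℝ≥0∞)
    (f : α → EReal) : EReal :=
  ((lintSR C μ fun x => epos (f x) : ℝ≥0∞) : EReal) -
    ((lintSR C μ fun x => epos (-f x) : ℝ≥0∞) : EReal)

/-- Integrability of an extended-real function w.r.t. a measure on a σ-ring. -/
def IntegrableE {α : Type*} (C : Set (Set α)) (μ : Set α → ℝ≥0∞)
    (f : α → EReal) : Prop :=
  SRMeasurableE C f ∧ lintSR C μ (fun x => (f x).abs) < ⊤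

/-- `lam` is the product of the measures `μ` and `ν` on σ-rings `S`, `T`:
the unique measure on the product σ-ring whose σ-finite component is the Halmos
product of the σ-finite components. -/
def IsProdMeasure {α β : Type*} (S : Set (Set α)) (T : Set (Set β))
    (μ : Set α → ℝ≥0∞) (ν : Set β → ℝ≥0∞) (lam : Set (α × β) → ℝ≥0∞) : Prop :=
  IsMeasure (prodSR S T) lam ∧
  (∀ A ∈ S, ∀ B ∈ T, μ A < ⊤ → ν B < ⊤ → lam (A ×ˢ B) = μ A * ν B) ∧
  sigmaFin (prodSR S T) lam =
    genSR {R | ∃ A ∈ S, ∃ B ∈ T, μ A < ⊤ ∧ ν B < ⊤ ∧ R = A ×ˢ B}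

lemma genSR_isSigmaRing {α : Type*} (D : Set (Set α)) : IsSigmaRing (genSR D) := by
  refine ⟨?_, ?_, ?_⟩
  · intro C hC; exact hC.1.1
  · intro A B hA hB C hC; exact hC.1.2.1 A B (hA C hC) (hB C hC)
  · intro f hf C hC; exact hC.1.2.2 f (fun n => hf n C hC)

lemma subset_genSR {α : Type*} (D : Set (Set α)) : D ⊆ genSR D := by
  intro A hA C hC; exact hC.2 hA

lemma genSR_subset {α : Type*} {D C : Set (Set α)} (h1 : IsSigmaRing C)
    (h2 : D ⊆ C) : genSR D ⊆ C := fun A hA => hA C ⟨h1, h2⟩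

lemma sigmaRing_iUnion_pair {α : Type*} {C : Set (Set α)} (hC : IsSigmaRing C)
    (f : ℕ × ℕ → Set α) (hf : ∀ p, f p ∈ C) : (⋃ p, f p) ∈ C := by
  have e := (Denumerable.eqv (ℕ × ℕ)).symm
  have : (⋃ p, f p) = ⋃ n, f (e n) := by
    ext x
    simp only [mem_iUnion]
    constructor
    · rintro ⟨p, hp⟩; exact ⟨e.symm p, by simpa using hp⟩
    · rintro ⟨n, hn⟩; exact ⟨e n, hn⟩
  rw [this]
  exact hC.2.2 _ (fun n => hf _)

/-- `𝔖^σ ⊗ 𝔗^σ` is generated by rectangles of sets of finite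
measure. -/
theorem stmt_6 {α β : Type*} (S : Set (Set α)) (T : Set (Set β))
    (μ : Set α → ℝ≥0∞) (ν : Set β → ℝ≥0∞)
    (hS : IsSigmaRing S) (hT : IsSigmaRing T)
    (hμ : IsMeasure S μ) (hν : IsMeasure T ν) :
    prodSR (sigmaFin S μ) (sigmaFin T ν) =
      genSR {R | ∃ A ∈ S, ∃ B ∈ T, μ A < ⊤ ∧ ν B < ⊤ ∧ R = A ×ˢ B} := by
  apply Set.Subset.antisymm
  · apply genSR_subset (genSR_isSigmaRing _)
    rintro R ⟨A, ⟨g, hg, rfl⟩, B, ⟨h, hh, rfl⟩, rfl⟩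
    have : (⋃ n, g n) ×ˢ (⋃ m, h m) = ⋃ p : ℕ × ℕ, g p.1 ×ˢ h p.2 := by
      ext x
      simp only [mem_prod, mem_iUnion, Prod.exists]
      constructor
      · rintro ⟨⟨n, hn⟩, ⟨m, hm⟩⟩; exact ⟨n, m, hn, hm⟩
      · rintro ⟨n, m, hn, hm⟩; exact ⟨⟨n, hn⟩, ⟨m, hm⟩⟩
    rw [this]
    apply sigmaRing_iUnion_pair (genSR_isSigmaRing _)
    intro p
    exact subset_genSR _ ⟨g p.1, (hg p.1).1, h p.2, (hh p.2).1,
      (hg p.1).2, (hh p.2).2, rfl⟩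
  · apply genSR_subset (genSR_isSigmaRing _)
    rintro R ⟨A, hA, B, hB, hAfin, hBfin, rfl⟩
    apply subset_genSR
    refine ⟨A, ⟨fun _ => A, fun n => ⟨hA, hAfin⟩, (iUnion_const A).symm⟩,
      B, ⟨fun _ => B, fun n => ⟨hB, hBfin⟩, (iUnion_const B).symm⟩, rfl⟩
end

section
/- Let (S,𝔖,μ) and (T,𝔗,ν) be measure spaces over σ-rings. A set C ∈ 𝔖 ⊗ 𝔗 belongs to 𝔖^σ ⊗ 𝔗^σ if and only if C ⊆ S' × T' for some μ-σ-finite S' ∈ 𝔖^σ and ν-σ-finite T' ∈ 𝔗^σ. -/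
open Set ENNReal

lemma genSR_min {α : Type*} {D C : Set (Set α)} (hC : IsSigmaRing C) (hDC : D ⊆ C) :
    genSR D ⊆ C := fun A hA => hA C ⟨hC, hDC⟩

lemma sr_inter {α : Type*} {S : Set (Set α)} (hS : IsSigmaRing S)
    {A B : Set α} (hA : A ∈ S) (hB : B ∈ S) : A ∩ B ∈ S := by
  have : A ∩ B = A \ (A \ B) := by ext x; simp only [Set.mem_inter_iff, Set.mem_diff]; tauto
  rw [this]; exact hS.2.1 _ _ hA (hS.2.1 _ _ hA hB)

lemma measure_mono' {α : Type*} {S : Set (Set α)} {μ : Set α → ℝ≥0∞}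
    (hS : IsSigmaRing S) (hμ : IsMeasure S μ)
    {E F : Set α} (hE : E ∈ S) (hF : F ∈ S) (hEF : E ⊆ F) : μ E ≤ μ F := by
  set f : ℕ → Set α := fun n => if n = 0 then E else if n = 1 then F \ E else ∅ with hf
  have hmem : ∀ n, f n ∈ S := by
    intro n
    rcases n with _ | _ | n
    · exact hE
    · exact hS.2.1 F E hF hE
    · exact hS.1
  have hdisj : Pairwise (Function.onFun Disjoint f) := by
    intro n m hnm
    have key : ∀ a b : ℕ, a < b → Disjoint (f a) (f b) := by
      intro a b hab
      rcases b with _ | _ | b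
      · omega
      · have ha : a = 0 := by omega
        subst ha
        simpa [hf] using (Set.disjoint_sdiff_right : Disjoint E (F \ E))
      · have hb : f (b + 1 + 1) = ∅ := by simp [hf]
        rw [hb]; exact Set.disjoint_empty _
    rcases hnm.lt_or_gt with h | h
    · exact key _ _ h
    · exact (key _ _ h).symm
  have hU : ⋃ n, f n = F := by
    apply Set.Subset.antisymm
    · apply Set.iUnion_subset
      intro n
      rcases n with _ | _ | n
      · exact hEF
      · exact Set.diff_subset
      · simp [hf]
    · rw [← Set.union_diff_cancel hEF]
      intro x hx
      rcases hx with hx | hx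
      · exact Set.mem_iUnion.2 ⟨0, hx⟩
      · exact Set.mem_iUnion.2 ⟨1, hx⟩
  have htot := hμ.2 f hmem hdisj
  rw [hU] at htot
  calc μ E = μ (f 0) := rfl
    _ ≤ ∑' n, μ (f n) := ENNReal.le_tsum 0
    _ = μ F := htot.symm

lemma sigmaFin_iUnion {α : Type*} {S : Set (Set α)} {μ : Set α → ℝ≥0∞}
    {f : ℕ → Set α} (hf : ∀ n, f n ∈ sigmaFin S μ) : (⋃ n, f n) ∈ sigmaFin S μ := by
  choose g hg hgu using hf
  refine ⟨fun k => g k.unpair.1 k.unpair.2, fun k => hg _ _, ?_⟩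
  rw [Set.iUnion_unpair]
  exact Set.iUnion_congr hgu

lemma sigmaFin_empty {α : Type*} {S : Set (Set α)} {μ : Set α → ℝ≥0∞}
    (hS : IsSigmaRing S) (hμ : IsMeasure S μ) : (∅ : Set α) ∈ sigmaFin S μ :=
  ⟨fun _ => ∅, fun _ => ⟨hS.1, by simp [hμ.1]⟩, by simp⟩

lemma sigmaFin_inter {α : Type*} {S : Set (Set α)} {μ : Set α → ℝ≥0∞}
    (hS : IsSigmaRing S) (hμ : IsMeasure S μ)
    {A S' : Set α} (hA : A ∈ S) (hS' : S' ∈ sigmaFin S μ) : A ∩ S' ∈ sigmaFin S μ := by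
  obtain ⟨g, hg, rfl⟩ := hS'
  refine ⟨fun n => A ∩ g n, fun n => ⟨sr_inter hS hA (hg n).1, ?_⟩, by rw [Set.inter_iUnion]⟩
  exact lt_of_le_of_lt (measure_mono' hS hμ (sr_inter hS hA (hg n).1) (hg n).1
    Set.inter_subset_right) (hg n).2

/-- a product-measurable set is in `𝔖^σ ⊗ 𝔗^σ` iff it is
contained in a rectangle of σ-finite sets. -/
theorem stmt_7 {α β : Type*} (S : Set (Set α)) (T : Set (Set β))
    (μ : Set α → ℝ≥0∞) (ν : Set β → ℝ≥0∞)
    (hS : IsSigmaRing S) (hT : IsSigmaRing T)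
    (hμ : IsMeasure S μ) (hν : IsMeasure T ν)
    (C : Set (α × β)) (hCmem : C ∈ prodSR S T) :
    C ∈ prodSR (sigmaFin S μ) (sigmaFin T ν) ↔
      ∃ S' ∈ sigmaFin S μ, ∃ T' ∈ sigmaFin T ν, C ⊆ S' ×ˢ T' := by
  constructor
  · intro hC
    set R : Set (Set (α × β)) :=
      {D | ∃ S' ∈ sigmaFin S μ, ∃ T' ∈ sigmaFin T ν, D ⊆ S' ×ˢ T'} with hR
    have hRring : IsSigmaRing R := by
      refine ⟨?_, ?_, ?_⟩
      · exact ⟨∅, sigmaFin_empty hS hμ, ∅, sigmaFin_empty hT hν, by simp⟩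
      · rintro A B ⟨S', hS', T', hT', hsub⟩ _
        exact ⟨S', hS', T', hT', fun x hx => hsub hx.1⟩
      · intro f hf
        choose S' hS' T' hT' hsub using hf
        refine ⟨⋃ n, S' n, sigmaFin_iUnion hS', ⋃ n, T' n, sigmaFin_iUnion hT', ?_⟩
        intro x hx
        obtain ⟨n, hn⟩ := Set.mem_iUnion.1 hx
        have := hsub n hn
        exact ⟨Set.mem_iUnion.2 ⟨n, this.1⟩, Set.mem_iUnion.2 ⟨n, this.2⟩⟩
    have hgen : {Q | ∃ A ∈ sigmaFin S μ, ∃ B ∈ sigmaFin T ν, Q = A ×ˢ B} ⊆ R := by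
      rintro Q ⟨A, hA, B, hB, rfl⟩
      exact ⟨A, hA, B, hB, le_refl _⟩
    exact genSR_min hRring hgen hC
  · rintro ⟨S', hS', T', hT', hsub⟩
    set M : Set (Set (α × β)) :=
      {D | D ∩ (S' ×ˢ T') ∈ prodSR (sigmaFin S μ) (sigmaFin T ν)} with hM
    have htarget : IsSigmaRing (prodSR (sigmaFin S μ) (sigmaFin T ν)) :=
      genSR_isSigmaRing _
    have hMring : IsSigmaRing M := by
      refine ⟨?_, ?_, ?_⟩
      · show ∅ ∩ (S' ×ˢ T') ∈ prodSR (sigmaFin S μ) (sigmaFin T ν)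
        rw [Set.empty_inter]; exact htarget.1
      · intro A B hA hB
        show (A \ B) ∩ (S' ×ˢ T') ∈ prodSR (sigmaFin S μ) (sigmaFin T ν)
        have : (A \ B) ∩ (S' ×ˢ T') = (A ∩ (S' ×ˢ T')) \ (B ∩ (S' ×ˢ T')) := by
          ext x; simp; tauto
        rw [this]; exact htarget.2.1 _ _ hA hB
      · intro f hf
        show (⋃ n, f n) ∩ (S' ×ˢ T') ∈ prodSR (sigmaFin S μ) (sigmaFin T ν)
        rw [Set.iUnion_inter]
        exact htarget.2.2 _ hf
    have hgen : {Q | ∃ A ∈ S, ∃ B ∈ T, Q = A ×ˢ B} ⊆ M := by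
      rintro Q ⟨A, hA, B, hB, rfl⟩
      show (A ×ˢ B) ∩ (S' ×ˢ T') ∈ prodSR (sigmaFin S μ) (sigmaFin T ν)
      rw [Set.prod_inter_prod]
      exact subset_genSR _ ⟨A ∩ S', sigmaFin_inter hS hμ hA hS',
        B ∩ T', sigmaFin_inter hT hν hB hT', rfl⟩
    have hCM : C ∈ M := genSR_min hMring hgen hCmem
    have : C ∩ (S' ×ˢ T') = C := Set.inter_eq_left.2 hsub
    rw [← this]
    exact hCM
end

section
/- For a measure μ on a σ-ring 𝔖, a measurable function f is μ-integrable if and only if it is integrable with respect to the σ-finite component μ^σ, and in that case ∫ f dμ = ∫ f dμ^σ. In particular, integrability and the value of the integral depend only on μ^σ. -/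
open Set ENNReal

section aux

variable {α : Type*} {C : Set (Set α)} {μ : Set α → ℝ≥0∞}

lemma inter_mem_sr (hC : IsSigmaRing C) {A B : Set α} (hA : A ∈ C) (hB : B ∈ C) :
    A ∩ B ∈ C := by
  have : A ∩ B = A \ (A \ B) := by rw [Set.diff_diff_right_self]
  rw [this]; exact hC.2.1 _ _ hA (hC.2.1 _ _ hA hB)

lemma mu_mono (hC : IsSigmaRing C) (hμ : IsMeasure C μ) {A B : Set α}
    (hA : A ∈ C) (hB : B ∈ C) (hAB : A ⊆ B) : μ A ≤ μ B := by
  set s : ℕ → Set α := fun n => if n = 0 then A else if n = 1 then B \ A else ∅ with hs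
  have hsC : ∀ n, s n ∈ C := by
    intro n; simp only [hs]
    split
    · exact hA
    · split
      · exact hC.2.1 _ _ hB hA
      · exact hC.1
  have hdisj : Pairwise (Function.onFun Disjoint s) := by
    intro i j hij
    simp only [Function.onFun, hs]
    rcases i with _|_|i <;> rcases j with _|_|j <;>
      simp_all [Set.disjoint_sdiff_right, Set.disjoint_sdiff_left]
  have hunion : (⋃ n, s n) = B := by
    apply Set.Subset.antisymm
    · intro x hx
      simp only [Set.mem_iUnion] at hx
      obtain ⟨n, hn⟩ := hx
      simp only [hs] at hn
      split at hn
      · exact hAB hn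
      · split at hn
        · exact hn.1
        · exact absurd hn (Set.notMem_empty x)
    · intro x hx
      by_cases hxA : x ∈ A
      · exact Set.mem_iUnion.mpr ⟨0, by simp [hs, hxA]⟩
      · exact Set.mem_iUnion.mpr ⟨1, by simp [hs, hx, hxA]⟩
  have := hμ.2 s hsC hdisj
  rw [hunion] at this
  rw [this]
  have h0 : μ (s 0) = μ A := by simp [hs]
  calc μ A = μ (s 0) := h0.symm
    _ ≤ ∑' n, μ (s n) := ENNReal.le_tsum 0

end aux

section aux2

variable {α : Type*} {C : Set (Set α)} {μ : Set α → ℝ≥0∞}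

lemma empty_mem_sigmaFin (hC : IsSigmaRing C) (hμ : IsMeasure C μ) :
    ∅ ∈ sigmaFin C μ :=
  ⟨fun _ => ∅, fun _ => ⟨hC.1, by rw [hμ.1]; exact ENNReal.zero_lt_top⟩,
    (Set.iUnion_empty).symm⟩

lemma sigmaFin_sub (hC : IsSigmaRing C) : sigmaFin C μ ⊆ C := by
  rintro A ⟨g, hg, rfl⟩
  exact hC.2.2 g fun n => (hg n).1

lemma mem_sigmaFin_of_subset (hC : IsSigmaRing C) (hμ : IsMeasure C μ)
    {A S : Set α} (hA : A ∈ C) (hS : S ∈ sigmaFin C μ) (hAS : A ⊆ S) :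
    A ∈ sigmaFin C μ := by
  obtain ⟨g, hg, rfl⟩ := hS
  refine ⟨fun n => A ∩ g n, fun n => ⟨inter_mem_sr hC hA (hg n).1, ?_⟩, ?_⟩
  · exact lt_of_le_of_lt
      (mu_mono hC hμ (inter_mem_sr hC hA (hg n).1) (hg n).1 Set.inter_subset_right) (hg n).2
  · rw [← Set.inter_iUnion]
    exact (Set.inter_eq_left.mpr hAS).symm

lemma restrict_mem (hC : IsSigmaRing C) {S : Set α} (hS : S ∈ C)
    {E : Set α} (hE : @MeasurableSet α (genSA C) E) : E ∩ S ∈ C := by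
  induction E, hE using MeasurableSpace.generateFrom_induction with
  | hC t ht _ => exact inter_mem_sr hC ht hS
  | empty => simpa using hC.1
  | compl t ht h =>
      have : tᶜ ∩ S = S \ (t ∩ S) := by ext x; simp; tauto
      rw [this]; exact hC.2.1 _ _ hS h
  | iUnion s hs h =>
      rw [Set.iUnion_inter]; exact hC.2.2 _ h

lemma lintSR_mono_fam {D : Set (Set α)} (hDC : D ⊆ C) (g : α → ℝ≥0∞) :
    lintSR D μ g ≤ lintSR C μ g := by
  refine iSup_le fun n => iSup_le fun c => iSup_le fun A => iSup_le fun hA =>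
    iSup_le fun hle => ?_
  exact le_iSup_of_le n <| le_iSup_of_le c <| le_iSup_of_le A <|
    le_iSup_of_le (fun i => hDC (hA i)) <| le_iSup_of_le hle le_rfl

lemma lintSR_single_le (g : α → ℝ≥0∞) (c : ℝ≥0∞) {A : Set α} (hA : A ∈ C)
    (h : ∀ x ∈ A, c ≤ g x) : c * μ A ≤ lintSR C μ g := by
  have hb : ∀ x, (∑ i : Fin 1, ((![A]) i).indicator (fun _ => (![c]) i) x) ≤ g x := by
    intro x
    simp only [Fin.sum_univ_one, Matrix.cons_val_zero]
    by_cases hx : x ∈ A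
    · rw [Set.indicator_of_mem hx]; exact h x hx
    · rw [Set.indicator_of_notMem hx]; exact zero_le
  have : c * μ A = ∑ i : Fin 1, (![c]) i * μ ((![A]) i) := by simp
  rw [this]
  exact le_iSup_of_le 1 <| le_iSup_of_le ![c] <| le_iSup_of_le ![A] <|
    le_iSup_of_le (fun i => by simpa using hA) <| le_iSup_of_le hb le_rfl

lemma lintSR_le_sigmaFin (hC : IsSigmaRing C) (hμ : IsMeasure C μ)
    {S : Set α} (hS : S ∈ sigmaFin C μ) (g : α → ℝ≥0∞)
    (hsupp : ∀ x, g x ≠ 0 → x ∈ S) :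
    lintSR C μ g ≤ lintSR (sigmaFin C μ) μ g := by
  refine iSup_le fun n => iSup_le fun c => iSup_le fun A => iSup_le fun hA =>
    iSup_le fun hle => ?_
  set A' : Fin n → Set α := fun i => if c i = 0 then ∅ else A i with hA'
  have hA'mem : ∀ i, A' i ∈ sigmaFin C μ := by
    intro i
    simp only [hA']
    split
    · exact empty_mem_sigmaFin hC hμ
    · rename_i hci
      refine mem_sigmaFin_of_subset hC hμ (hA i) hS fun x hx => ?_
      apply hsupp
      refine fun hg => hci (le_antisymm ?_ zero_le)
      calc c i = (A i).indicator (fun _ => c i) x := (Set.indicator_of_mem hx fun _ => c i).symm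
        _ ≤ ∑ j, (A j).indicator (fun _ => c j) x :=
            Finset.single_le_sum (f := fun j => (A j).indicator (fun _ => c j) x)
              (fun j _ => zero_le) (Finset.mem_univ i)
        _ ≤ g x := hle x
        _ = 0 := hg
  have hle' : ∀ x, (∑ i, (A' i).indicator (fun _ => c i) x) ≤ g x := by
    intro x
    refine le_trans (Finset.sum_le_sum fun i _ => ?_) (hle x)
    simp only [hA']
    split
    · rename_i hci; simp [hci]
    · exact le_rfl
  have hsum : (∑ i, c i * μ (A' i)) = ∑ i, c i * μ (A i) := by
    refine Finset.sum_congr rfl fun i _ => ?_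
    simp only [hA']
    split
    · rename_i hci; simp [hci]
    · rfl
  rw [← hsum]
  exact le_iSup_of_le n <| le_iSup_of_le c <| le_iSup_of_le A' <|
    le_iSup_of_le hA'mem <| le_iSup_of_le hle' le_rfl

end aux2

section aux3

variable {α : Type*} {C : Set (Set α)} {μ : Set α → ℝ≥0∞}

lemma abs_ofReal_le {y : EReal} {c : ℝ} (hc : 0 ≤ c) (h : (c : EReal) ≤ y) :
    ENNReal.ofReal c ≤ y.abs := by
  induction y using EReal.rec with
  | bot => exact le_top
  | top => exact le_top
  | coe r =>
      rw [EReal.abs_def]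
      exact ENNReal.ofReal_le_ofReal (le_trans (EReal.coe_le_coe_iff.mp h) (le_abs_self r))

lemma ereal_exists_inv_le {y : EReal} (hy : 0 < y) :
    ∃ n : ℕ, ((((n : ℝ) + 1)⁻¹ : ℝ) : EReal) ≤ y := by
  induction y using EReal.rec with
  | bot => exact absurd hy (by simp)
  | top => exact ⟨0, le_top⟩
  | coe r =>
      have hr : 0 < r := EReal.coe_pos.mp hy
      obtain ⟨n, hn⟩ := exists_nat_one_div_lt hr
      exact ⟨n, by rw [EReal.coe_le_coe_iff]; rw [one_div] at hn; exact le_of_lt hn⟩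

lemma support_sigmaFin (hC : IsSigmaRing C) (hμ : IsMeasure C μ)
    (f : α → EReal) (hf : SRMeasurableE C f)
    (hfin : lintSR C μ (fun x => (f x).abs) < ⊤) :
    {x | f x ≠ 0} ∈ sigmaFin C μ := by
  set S := {x | f x ≠ 0} with hSdef
  set g : ℕ → Set α := fun n =>
    f ⁻¹' (Set.Ici ((((n : ℝ) + 1)⁻¹ : ℝ) : EReal) ∪
      Set.Iic (-((((n : ℝ) + 1)⁻¹ : ℝ) : EReal))) ∩ S with hg
  have hgC : ∀ n, g n ∈ C := by
    intro n
    exact restrict_mem hC hf.2 (hf.1 (measurableSet_Ici.union measurableSet_Iic))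
  have habs : ∀ n, ∀ x ∈ g n, ENNReal.ofReal (((n : ℝ) + 1)⁻¹) ≤ (f x).abs := by
    intro n x hx
    have hc : (0:ℝ) ≤ ((n : ℝ) + 1)⁻¹ := by positivity
    rcases hx.1 with h | h
    · exact abs_ofReal_le hc h
    · rw [← EReal.abs_neg]
      exact abs_ofReal_le hc (EReal.le_neg_of_le_neg h)
  have hgfin : ∀ n, μ (g n) < ⊤ := by
    intro n
    have h1 : ENNReal.ofReal (((n : ℝ) + 1)⁻¹) * μ (g n) ≤
        lintSR C μ (fun x => (f x).abs) :=
      lintSR_single_le _ _ (hgC n) (habs n)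
    have h2 := lt_of_le_of_lt h1 hfin
    have hne : ENNReal.ofReal (((n : ℝ) + 1)⁻¹) ≠ 0 := by
      simp only [ne_eq, ENNReal.ofReal_eq_zero, not_le]
      positivity
    by_contra h
    rw [not_lt, top_le_iff] at h
    rw [h, ENNReal.mul_top hne] at h2
    exact absurd h2 (lt_irrefl _)
  refine ⟨g, fun n => ⟨hgC n, hgfin n⟩, ?_⟩
  apply Set.Subset.antisymm
  · intro x hx
    rcases lt_or_gt_of_ne hx with hlt | hgt
    · have : 0 < -f x := by rw [show (0:EReal) = -0 from neg_zero.symm]; exact EReal.neg_lt_neg_iff.mpr hlt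
      obtain ⟨n, hn⟩ := ereal_exists_inv_le this
      exact Set.mem_iUnion.mpr ⟨n, ⟨Or.inr (EReal.le_neg_of_le_neg hn), hx⟩⟩
    · obtain ⟨n, hn⟩ := ereal_exists_inv_le hgt
      exact Set.mem_iUnion.mpr ⟨n, ⟨Or.inl hn, hx⟩⟩
  · intro x hx
    rw [Set.mem_iUnion] at hx
    obtain ⟨n, hn⟩ := hx
    exact hn.2

lemma measurable_sigmaFin (hC : IsSigmaRing C) (hμ : IsMeasure C μ)
    {f : α → EReal} (hm : @Measurable α EReal (genSA C) _ f)
    (hS : {x | f x ≠ 0} ∈ sigmaFin C μ) :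
    @Measurable α EReal (genSA (sigmaFin C μ)) _ f := by
  intro E hE
  set S := {x | f x ≠ 0} with hSdef
  have hSC : S ∈ C := sigmaFin_sub hC hS
  have h1 : f ⁻¹' E ∩ S ∈ sigmaFin C μ :=
    mem_sigmaFin_of_subset hC hμ (restrict_mem hC hSC (hm hE)) hS Set.inter_subset_right
  have hSm : @MeasurableSet α (genSA (sigmaFin C μ)) S :=
    MeasurableSpace.measurableSet_generateFrom hS
  have h1m : @MeasurableSet α (genSA (sigmaFin C μ)) (f ⁻¹' E ∩ S) :=
    MeasurableSpace.measurableSet_generateFrom h1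
  by_cases h0 : (0 : EReal) ∈ E
  · have heq : f ⁻¹' E = (f ⁻¹' E ∩ S) ∪ Sᶜ := by
      ext x
      by_cases hx : f x = 0 <;> simp [hSdef, hx, h0]
    rw [heq]
    exact h1m.union hSm.compl
  · have heq : f ⁻¹' E = f ⁻¹' E ∩ S := by
      ext x
      by_cases hx : f x = 0 <;> simp [hSdef, hx, h0]
    rw [heq]
    exact h1m

end aux3

/-- integrability and the value of the integral depend only on
the σ-finite component of the measure. -/
theorem stmt_14 {α : Type*} (C : Set (Set α)) (μ : Set α → ℝ≥0∞)
    (hC : IsSigmaRing C) (hμ : IsMeasure C μ)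
    (f : α → EReal) (hf : SRMeasurableE C f) :
    (IntegrableE C μ f ↔ IntegrableE (sigmaFin C μ) μ f) ∧
      (IntegrableE C μ f → integralE C μ f = integralE (sigmaFin C μ) μ f) := by
  have habs_supp : ∀ x : α, (f x).abs ≠ 0 → x ∈ {x | f x ≠ 0} := by
    intro x hx
    simpa using fun h => hx (by rw [h, EReal.abs_zero])
  have hpos_supp : ∀ x : α, epos (f x) ≠ 0 → x ∈ {x | f x ≠ 0} := by
    intro x hx
    simpa using fun h => hx (by simp [epos, h, EReal.abs_zero])
  have hneg_supp : ∀ x : α, epos (-f x) ≠ 0 → x ∈ {x | f x ≠ 0} := by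
    intro x hx
    simpa using fun h => hx (by simp [epos, h, EReal.abs_zero])
  constructor
  · constructor
    · rintro ⟨⟨hm, hsup⟩, hfin⟩
      have hS : {x | f x ≠ 0} ∈ sigmaFin C μ :=
        support_sigmaFin hC hμ f ⟨hm, hsup⟩ hfin
      refine ⟨⟨measurable_sigmaFin hC hμ hm hS, hS⟩, ?_⟩
      exact lt_of_le_of_lt (lintSR_mono_fam (sigmaFin_sub hC) _) hfin
    · rintro ⟨⟨_, hS⟩, hfin⟩
      refine ⟨hf, ?_⟩
      exact lt_of_le_of_lt (lintSR_le_sigmaFin hC hμ hS _ habs_supp) hfin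
  · rintro ⟨⟨hm, hsup⟩, hfin⟩
    have hS : {x | f x ≠ 0} ∈ sigmaFin C μ :=
      support_sigmaFin hC hμ f ⟨hm, hsup⟩ hfin
    have h1 : lintSR C μ (fun x => epos (f x)) =
        lintSR (sigmaFin C μ) μ (fun x => epos (f x)) :=
      le_antisymm (lintSR_le_sigmaFin hC hμ hS _ hpos_supp)
        (lintSR_mono_fam (sigmaFin_sub hC) _)
    have h2 : lintSR C μ (fun x => epos (-f x)) =
        lintSR (sigmaFin C μ) μ (fun x => epos (-f x)) :=
      le_antisymm (lintSR_le_sigmaFin hC hμ hS _ hneg_supp)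
        (lintSR_mono_fam (sigmaFin_sub hC) _)
    unfold integralE
    rw [h1, h2]
end

section
/- Tonelli for products of arbitrary measures: Let μ, ν be measures on σ-rings 𝔖, 𝔗 and μ⊗ν their product. If f ∈ M⁺(S×T, 𝔖⊗𝔗) is 𝔖^σ⊗𝔗^σ-measurable (equivalently, {x : f(x) ≠ 0} is (μ⊗ν)-σ-finite), then ∫ f d(μ⊗ν) = ∫ (∫ f(s,t) dν(t)) dμ(s) = ∫ (∫ f(s,t) dμ(s)) dν(t), and finiteness of any one of the three quantities implies f is (μ⊗ν)-integrable. -/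
open Set ENNReal

open MeasureTheory

namespace SRbasic

variable {α : Type*} {C : Set (Set α)} {μ : Set α → ℝ≥0∞}

/-- the two-element sequence -/
def pseq (A B : Set α) : ℕ → Set α
  | 0 => A
  | 1 => B
  | _ => ∅

lemma pseq_union (A B : Set α) : (⋃ n, pseq A B n) = A ∪ B := by
  apply subset_antisymm
  · refine iUnion_subset fun n => ?_
    match n with
    | 0 => exact subset_union_left
    | 1 => exact subset_union_right
    | (k+2) => exact empty_subset _
  · exact union_subset (subset_iUnion (pseq A B) 0) (subset_iUnion (pseq A B) 1)

lemma pseq_mem (hC : IsSigmaRing C) {A B : Set α} (hA : A ∈ C) (hB : B ∈ C) :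
    ∀ n, pseq A B n ∈ C := by
  intro n
  match n with
  | 0 => exact hA
  | 1 => exact hB
  | (k+2) => exact hC.1

lemma union2 (hC : IsSigmaRing C) {A B : Set α} (hA : A ∈ C) (hB : B ∈ C) : A ∪ B ∈ C := by
  rw [← pseq_union A B]; exact hC.2.2 _ (pseq_mem hC hA hB)

lemma inter2 (hC : IsSigmaRing C) {A B : Set α} (hA : A ∈ C) (hB : B ∈ C) : A ∩ B ∈ C := by
  have : A ∩ B = A \ (A \ B) := by ext x; simp (config := {contextual := true}) [not_imp_not]
  rw [this]; exact hC.2.1 _ _ hA (hC.2.1 _ _ hA hB)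

lemma pseq_pairwise {A B : Set α} (hd : Disjoint A B) :
    Pairwise (Function.onFun Disjoint (pseq A B)) := by
  intro i j hij
  have he : ∀ k, pseq A B (k+2) = (∅ : Set α) := fun k => rfl
  match i, j with
  | 0, 0 => exact absurd rfl hij
  | 0, 1 => exact hd
  | 1, 0 => exact hd.symm
  | 1, 1 => exact absurd rfl hij
  | (k+2), j => rw [Function.onFun, he k]; exact disjoint_bot_left
  | 0, (k+2) => rw [Function.onFun, he k]; exact disjoint_bot_right
  | 1, (k+2) => rw [Function.onFun, he k]; exact disjoint_bot_right

lemma meas_union2 (hC : IsSigmaRing C) (hμ : IsMeasure C μ) {A B : Set α}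
    (hA : A ∈ C) (hB : B ∈ C) (hd : Disjoint A B) : μ (A ∪ B) = μ A + μ B := by
  rw [← pseq_union A B, hμ.2 _ (pseq_mem hC hA hB) (pseq_pairwise hd)]
  rw [tsum_eq_sum (s := {0, 1}) ?_]
  · simp [pseq]
  · intro n hn
    simp only [Finset.mem_insert, Finset.mem_singleton] at hn
    push_neg at hn
    match n, hn with
    | (k+2), _ => exact hμ.1

lemma meas_mono (hC : IsSigmaRing C) (hμ : IsMeasure C μ) {A B : Set α}
    (hA : A ∈ C) (hB : B ∈ C) (h : A ⊆ B) : μ A ≤ μ B := by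
  have : B = A ∪ (B \ A) := by rw [union_diff_cancel h]
  rw [this, meas_union2 hC hμ hA (hC.2.1 _ _ hB hA) disjoint_sdiff_self_right]
  exact le_self_add

lemma psups_mem (hC : IsSigmaRing C) {u : ℕ → Set α} (hu : ∀ n, u n ∈ C) (n : ℕ) :
    (partialSups u n : Set α) ∈ C := by
  induction n with
  | zero => simpa using hu 0
  | succ k ih => rw [show partialSups u (k+1) = partialSups u k ⊔ u (k+1) from partialSups_succ u k]; exact union2 hC ih (hu (k+1))

lemma disjointed_mem (hC : IsSigmaRing C) {u : ℕ → Set α} (hu : ∀ n, u n ∈ C) (n : ℕ) :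
    disjointed u n ∈ C := by
  cases n with
  | zero => simpa using hu 0
  | succ k =>
    rw [disjointed_add_one]
    exact hC.2.1 _ _ (hu (k+1)) (psups_mem hC hu k)

lemma meas_ctble_subadd (hC : IsSigmaRing C) (hμ : IsMeasure C μ) {u : ℕ → Set α}
    (hu : ∀ n, u n ∈ C) : μ (⋃ n, u n) ≤ ∑' n, μ (u n) := by
  have h1 : (⋃ n, u n) = ⋃ n, disjointed u n := (iUnion_disjointed).symm
  rw [h1, hμ.2 _ (disjointed_mem hC hu) (disjoint_disjointed u)]
  exact ENNReal.tsum_le_tsum fun n =>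
    meas_mono hC hμ (disjointed_mem hC hu n) (hu n) (disjointed_subset u n)

lemma meas_psups (hC : IsSigmaRing C) (hμ : IsMeasure C μ) {d : ℕ → Set α}
    (hd : ∀ n, d n ∈ C) (hdisj : Pairwise (Function.onFun Disjoint d)) (n : ℕ) :
    μ (partialSups d n : Set α) = ∑ i ∈ Finset.range (n+1), μ (d i) := by
  induction n with
  | zero => simp
  | succ k ih =>
    rw [show partialSups d (k+1) = partialSups d k ⊔ d (k+1) from partialSups_succ d k]
    have hdisj2 : Disjoint (partialSups d k : Set α) (d (k+1)) := by
      rw [partialSups_eq_biSup]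
      refine disjoint_iff_inf_le.2 ?_
      rw [iSup₂_inf_eq]
      refine iSup₂_le fun i hi => ?_
      exact disjoint_iff_inf_le.1 (hdisj (by omega : i ≠ k+1))
    have : μ ((partialSups d k : Set α) ∪ d (k+1)) = _ + _ :=
      meas_union2 hC hμ (psups_mem hC hd k) (hd (k+1)) hdisj2
    show μ ((partialSups d k : Set α) ∪ d (k+1)) = _
    rw [this, ih, Finset.sum_range_succ (n := k+1), Finset.sum_range_succ (n := k)]

lemma meas_cts_below (hC : IsSigmaRing C) (hμ : IsMeasure C μ) {E : ℕ → Set α}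
    (hE : ∀ n, E n ∈ C) (hmono : Monotone E) : μ (⋃ n, E n) = ⨆ n, μ (E n) := by
  have h1 : (⋃ n, E n) = ⋃ n, disjointed E n := (iUnion_disjointed).symm
  have hkey : ∀ n, μ (E n) = ∑ i ∈ Finset.range (n+1), μ (disjointed E i) := by
    intro n
    rw [← meas_psups hC hμ (disjointed_mem hC hE) (disjoint_disjointed E), partialSups_disjointed,
      hmono.partialSups_eq]
  rw [h1, hμ.2 _ (disjointed_mem hC hE) (disjoint_disjointed E), ENNReal.tsum_eq_iSup_nat]
  apply le_antisymm
  · refine iSup_le fun n => ?_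
    match n with
    | 0 => simp
    | (m+1) => rw [← hkey m]; exact le_iSup (fun k => μ (E k)) m
  · refine iSup_le fun n => ?_
    rw [hkey n]
    exact le_iSup (fun k => ∑ i ∈ Finset.range k, μ (disjointed E i)) (n+1)


/-! ### generated σ-ring -/

lemma genSR_isSigmaRing (D : Set (Set α)) : IsSigmaRing (genSR D) := by
  refine ⟨fun X hX => hX.1.1, fun A B hA hB X hX => hX.1.2.1 A B (hA X hX) (hB X hX),
    fun f hf X hX => hX.1.2.2 f (fun n => hf n X hX)⟩

lemma subset_genSR (D : Set (Set α)) : D ⊆ genSR D := fun A hA X hX => hX.2 hA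

lemma genSR_subset {D : Set (Set α)} {C : Set (Set α)} (hC : IsSigmaRing C) (h : D ⊆ C) :
    genSR D ⊆ C := fun A hA => hA C ⟨hC, h⟩

lemma genSR_subset_genSA {D : Set (Set α)} {A : Set α} (hA : A ∈ genSR D) :
    MeasurableSet[genSA D] A := by
  have : IsSigmaRing {A : Set α | MeasurableSet[genSA D] A} := by
    refine ⟨?_, fun A B hA hB => ?_, fun f hf => ?_⟩
    · exact @MeasurableSet.empty _ (genSA D)
    · simp only [Set.mem_setOf_eq] at *
      exact MeasurableSet.diff hA hB
    · simp only [Set.mem_setOf_eq] at *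
      exact MeasurableSet.iUnion hf
  exact genSR_subset this (fun A hA => MeasurableSpace.measurableSet_generateFrom hA) hA

/-- trace: a `genSA C`-measurable set intersected with a member of the σ-ring `C`
is in `C`. -/
lemma trace_mem (hC : IsSigmaRing C) {B : Set α} (hB : MeasurableSet[genSA C] B)
    {A : Set α} (hA : A ∈ C) : B ∩ A ∈ C := by
  have key : ∀ E, MeasurableSet[genSA C] E → E ∩ A ∈ C := by
    intro E hE
    induction hE with
    | basic u hu => exact inter2 hC hu hA
    | empty => simpa using hC.1
    | compl u _ ih =>
      have : uᶜ ∩ A = A \ (u ∩ A) := by ext x; simp (config := {contextual := true}) [and_comm]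
      rw [this]; exact hC.2.1 _ _ hA ih
    | iUnion f _ ih =>
      rw [iUnion_inter]; exact hC.2.2 _ ih
  exact key B hB

/-- every member of the generated σ-ring is covered by countably many generators (or `∅`). -/
lemma genSR_cover {D : Set (Set α)} {E : Set α} (hE : E ∈ genSR D) :
    ∃ u : ℕ → Set α, (∀ n, u n ∈ D ∨ u n = ∅) ∧ E ⊆ ⋃ n, u n := by
  set G : Set (Set α) := {E | ∃ u : ℕ → Set α, (∀ n, u n ∈ D ∨ u n = ∅) ∧ E ⊆ ⋃ n, u n} with hG
  have hGr : IsSigmaRing G := by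
    refine ⟨⟨fun _ => ∅, fun n => Or.inr rfl, empty_subset _⟩, ?_, ?_⟩
    · rintro A B ⟨u, hu, hA⟩ _
      exact ⟨u, hu, (diff_subset).trans hA⟩
    · rintro f hf
      choose u hu hsub using hf
      refine ⟨fun n => u n.unpair.1 n.unpair.2, fun n => hu _ _, ?_⟩
      refine iUnion_subset fun n => (hsub n).trans (iUnion_subset fun m => ?_)
      exact subset_iUnion_of_subset (Nat.pair n m) (by rw [Nat.unpair_pair])
  exact genSR_subset hGr (fun A hA => ⟨fun _ => A, fun n => Or.inl hA, subset_iUnion (fun _ => A) 0⟩) hE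

/-! ### the measure induced on `genSA C` -/

variable (C μ) in
/-- The outer measure induced by a measure on a σ-ring. -/
noncomputable def srOuter (hC : IsSigmaRing C) (hμ : IsMeasure C μ) : OuterMeasure α :=
  inducedOuterMeasure (fun s (_ : s ∈ C) => μ s) hC.1 hμ.1

lemma srOuter_msU (hC : IsSigmaRing C) (hμ : IsMeasure C μ) :
    ∀ ⦃f : ℕ → Set α⦄ (hm : ∀ i, f i ∈ C),
      (fun s (_ : s ∈ C) => μ s) (⋃ i, f i) (hC.2.2 f hm) ≤ ∑' i, μ (f i) := by
  intro f hm
  exact meas_ctble_subadd hC hμ hm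

lemma srOuter_mono (hC : IsSigmaRing C) (hμ : IsMeasure C μ) :
    ∀ ⦃s₁ s₂ : Set α⦄ (hs₁ : s₁ ∈ C) (hs₂ : s₂ ∈ C), s₁ ⊆ s₂ → μ s₁ ≤ μ s₂ :=
  fun _ _ h1 h2 h => meas_mono hC hμ h1 h2 h

lemma srOuter_eq (hC : IsSigmaRing C) (hμ : IsMeasure C μ) {A : Set α} (hA : A ∈ C) :
    srOuter C μ hC hμ A = μ A :=
  inducedOuterMeasure_eq' hC.2.2 (srOuter_msU hC hμ) (srOuter_mono hC hμ) hA

lemma genSA_le_caratheodory (hC : IsSigmaRing C) (hμ : IsMeasure C μ) :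
    genSA C ≤ (srOuter C μ hC hμ).caratheodory := by
  refine MeasurableSpace.generateFrom_le fun s hs => ?_
  rw [srOuter, inducedOuterMeasure_caratheodory hC.2.2 (srOuter_msU hC hμ) (srOuter_mono hC hμ)]
  intro t ht
  have h1 : t ∩ s ∈ C := inter2 hC ht hs
  have h2 : t \ s ∈ C := hC.2.1 _ _ ht hs
  rw [show (inducedOuterMeasure (fun s (_ : s ∈ C) => μ s) hC.1 hμ.1) = srOuter C μ hC hμ from rfl,
    srOuter_eq hC hμ h1, srOuter_eq hC hμ h2, srOuter_eq hC hμ ht,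
    ← meas_union2 hC hμ h1 h2 (disjoint_sdiff_self_right.mono_left inter_subset_right),
    inter_union_diff]

variable (C μ) in
/-- The measure on `genSA C` induced by a measure on the σ-ring `C`. -/
noncomputable def srMeasure (hC : IsSigmaRing C) (hμ : IsMeasure C μ) : @Measure α (genSA C) :=
  @OuterMeasure.toMeasure α (genSA C) (srOuter C μ hC hμ) (genSA_le_caratheodory hC hμ)

lemma srMeasure_eq (hC : IsSigmaRing C) (hμ : IsMeasure C μ) {A : Set α} (hA : A ∈ C) :
    srMeasure C μ hC hμ A = μ A := by
  rw [srMeasure, @MeasureTheory.toMeasure_apply α (genSA C) _ _ _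
    (MeasurableSpace.measurableSet_generateFrom hA)]
  exact srOuter_eq hC hμ hA

end SRbasic

namespace SRbasic

variable {α : Type*} {C : Set (Set α)} {μ : Set α → ℝ≥0∞}

/-- Master lemma: if `Q` is a measure on a σ-algebra refining `genSA C` that agrees
with `μ` on members of `C` contained in `⋃ u`, and `g` is `genSA C`-measurable with
support in `⋃ u`, then `lintSR C μ g` equals the `Q`-Lebesgue-integral of `g`. -/
lemma lintSR_eq_lintegral (hC : IsSigmaRing C) (hμ : IsMeasure C μ)
    {m : MeasurableSpace α} (hm : genSA C ≤ m) (Q : MeasureTheory.Measure α)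
    {u : ℕ → Set α} (hu : ∀ n, u n ∈ C)
    (hQ : ∀ E, E ∈ C → E ⊆ (⋃ n, u n) → Q E = μ E)
    {g : α → ℝ≥0∞} (hg : Measurable[genSA C] g)
    (hsupp : {x | g x ≠ 0} ⊆ ⋃ n, u n) :
    lintSR C μ g = ∫⁻ x, g x ∂Q := by
  have hgm : Measurable[m] g := hg.mono hm le_rfl
  have hmeasC : ∀ {E : Set α}, E ∈ C → MeasurableSet[m] E := fun hE =>
    hm _ (MeasurableSpace.measurableSet_generateFrom hE)
  apply le_antisymm
  · -- ≤ : every C-simple function below g has integral ≤ ∫ g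
    refine iSup_le fun n => iSup_le fun c => iSup_le fun A => iSup_le fun hA =>
      iSup_le fun hle => ?_
    have key : ∀ i : Fin n, c i * μ (A i) = c i * Q (A i) := by
      intro i
      rcases eq_or_ne (c i) 0 with h | h
      · simp [h]
      · have hsub : A i ⊆ {x | g x ≠ 0} := by
          intro x hx
          have h1 : (A i).indicator (fun _ => c i) x = c i := Set.indicator_of_mem hx _
          have h2 : (A i).indicator (fun _ => c i) x ≤ ∑ j, (A j).indicator (fun _ => c j) x :=
            Finset.single_le_sum (f := fun j => (A j).indicator (fun _ => c j) x)
              (fun j _ => zero_le) (Finset.mem_univ i)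
          have := (h2.trans (hle x))
          rw [h1] at this
          exact fun h0 => h (le_antisymm (h0 ▸ this) zero_le)
        rw [hQ (A i) (hA i) (hsub.trans hsupp)]
    calc ∑ i, c i * μ (A i) = ∑ i, c i * Q (A i) := by simp_rw [key]
      _ = ∑ i, ∫⁻ x, (A i).indicator (fun _ => c i) x ∂Q := by
          refine Finset.sum_congr rfl fun i _ => ?_
          rw [MeasureTheory.lintegral_indicator_const (hmeasC (hA i))]
      _ = ∫⁻ x, ∑ i, (A i).indicator (fun _ => c i) x ∂Q := by
          rw [MeasureTheory.lintegral_finset_sum]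
          exact fun i _ => (measurable_const.indicator (hmeasC (hA i)))
      _ ≤ ∫⁻ x, g x ∂Q := MeasureTheory.lintegral_mono hle
  · -- ≥ direction
    set Cn : ℕ → Set α := fun n => (partialSups u n : Set α) with hCn
    have hCnC : ∀ n, Cn n ∈ C := psups_mem hC hu
    have hCnU : ∀ n, Cn n ⊆ ⋃ k, u k := by
      intro n
      have : partialSups u n ≤ ⋃ k, u k := partialSups_le u n _ (fun i _ => subset_iUnion u i)
      exact this
    have hCnmono : Monotone Cn := fun a b hab => (partialSups u).monotone hab
    have hgeq : ∀ x, (⨆ n, (Cn n).indicator g x) = g x := by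
      intro x
      refine le_antisymm (iSup_le fun n => Set.indicator_le_self _ _ x) ?_
      rcases eq_or_ne (g x) 0 with h | h
      · simp [h]
      · obtain ⟨n, hn⟩ := Set.mem_iUnion.1 (hsupp h)
        have hxC : x ∈ Cn n := le_partialSups u n hn
        exact le_iSup_of_le n (le_of_eq (Set.indicator_of_mem hxC g).symm)
    have step1 : ∫⁻ x, g x ∂Q = ⨆ n, ∫⁻ x, (Cn n).indicator g x ∂Q := by
      rw [← MeasureTheory.lintegral_iSup
        (fun n => hgm.indicator (hmeasC (hCnC n)))
        (fun a b hab x => Set.indicator_le_indicator_of_subset (hCnmono hab) (fun _ => zero_le) x)]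
      exact MeasureTheory.lintegral_congr fun x => (hgeq x).symm
    rw [step1]
    refine iSup_le fun n => ?_
    -- approximate by simple functions
    set eap : ℕ → α → ℝ≥0∞ := fun k => ⇑(@MeasureTheory.SimpleFunc.eapprox α (genSA C) g k)
      with heap
    have heapmeasC : ∀ k, Measurable[genSA C] (eap k) :=
      fun k => @MeasureTheory.SimpleFunc.measurable α _ (genSA C) _
        (@MeasureTheory.SimpleFunc.eapprox α (genSA C) g k)
    have heapmeas : ∀ k, Measurable[m] (eap k) := fun k => (heapmeasC k).mono hm le_rfl
    have heapmono : ∀ (a b : ℕ), a ≤ b → ∀ x, eap a x ≤ eap b x := fun a b hab x =>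
      @MeasureTheory.SimpleFunc.monotone_eapprox α (genSA C) g a b hab x
    have heapsup : ∀ x, (⨆ k, eap k x) = g x := fun x =>
      @MeasureTheory.SimpleFunc.iSup_eapprox_apply α (genSA C) g hg x
    have heaple : ∀ k x, eap k x ≤ g x := fun k x => (heapsup x) ▸ le_iSup (fun j => eap j x) k
    have hfiber : ∀ k c, MeasurableSet[genSA C] ((eap k) ⁻¹' {c}) := fun k c =>
      @MeasureTheory.SimpleFunc.measurableSet_fiber α _ (genSA C)
        (@MeasureTheory.SimpleFunc.eapprox α (genSA C) g k) c
    have step2 : ∫⁻ x, (Cn n).indicator g x ∂Q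
        = ⨆ k, ∫⁻ x, (Cn n).indicator (eap k) x ∂Q := by
      rw [← MeasureTheory.lintegral_iSup]
      · refine MeasureTheory.lintegral_congr fun x => ?_
        rcases Classical.em (x ∈ Cn n) with hx | hx
        · simp only [Set.indicator_of_mem hx]
          exact (heapsup x).symm
        · simp [Set.indicator_of_notMem hx]
      · exact fun k => (heapmeas k).indicator (hmeasC (hCnC n))
      · intro a b hab x
        rcases Classical.em (x ∈ Cn n) with hx | hx
        · simp only [Set.indicator_of_mem hx]
          exact heapmono a b hab x
        · simp [Set.indicator_of_notMem hx]
    rw [step2]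
    refine iSup_le fun k => ?_
    -- turn the simple function (eap k) restricted to Cn n into a C-simple function
    set R : Finset ℝ≥0∞ :=
      @MeasureTheory.SimpleFunc.range α ℝ≥0∞ (genSA C)
        (@MeasureTheory.SimpleFunc.eapprox α (genSA C) g k) with hR
    have hmemR : ∀ x, eap k x ∈ R :=
      fun x => @MeasureTheory.SimpleFunc.mem_range_self α ℝ≥0∞ (genSA C)
        (@MeasureTheory.SimpleFunc.eapprox α (genSA C) g k) x
    set m0 : ℕ := R.card with hm0
    set e : {x // x ∈ R} ≃ Fin m0 := R.equivFin with he
    set ci : Fin m0 → ℝ≥0∞ := fun i => (e.symm i : ℝ≥0∞) with hci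
    set Ai : Fin m0 → Set α := fun i => (eap k) ⁻¹' {ci i} ∩ Cn n with hAi
    have hAiC : ∀ i, Ai i ∈ C := fun i => trace_mem hC (hfiber k (ci i)) (hCnC n)
    have hsum : ∀ x, (∑ i, (Ai i).indicator (fun _ => ci i) x) = (Cn n).indicator (eap k) x := by
      intro x
      rcases Classical.em (x ∈ Cn n) with hx | hx
      · rw [Set.indicator_of_mem hx]
        have h1 : ∀ i : Fin m0, (Ai i).indicator (fun _ => ci i) x
            = if ci i = eap k x then ci i else 0 := by
          intro i
          rcases eq_or_ne (ci i) (eap k x) with h | h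
          · rw [if_pos h]
            have hx2 : x ∈ Ai i := ⟨Set.mem_singleton_iff.2 h.symm, hx⟩
            exact Set.indicator_of_mem hx2 _
          · rw [if_neg h]
            refine Set.indicator_of_notMem ?_ _
            rintro ⟨h1, -⟩
            exact h (Set.mem_singleton_iff.1 h1).symm
        simp_rw [h1]
        have hconv : (∑ i : Fin m0, if ci i = eap k x then ci i else 0)
            = ∑ a ∈ R, (if a = eap k x then a else 0) := by
          rw [← Finset.sum_coe_sort R (fun a => if a = eap k x then a else 0),
            ← Equiv.sum_comp e.symm
              (fun a : {x // x ∈ R} => if (a : ℝ≥0∞) = eap k x then (a : ℝ≥0∞) else 0)]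
          try rfl
        rw [hconv, Finset.sum_ite_eq' R (eap k x) (fun a => a), if_pos (hmemR x)]
      · rw [Set.indicator_of_notMem hx]
        refine Finset.sum_eq_zero fun i _ => Set.indicator_of_notMem (fun hmem => hx hmem.2) _
    have hle : ∀ x, (∑ i, (Ai i).indicator (fun _ => ci i) x) ≤ g x := by
      intro x
      rw [hsum x]
      exact le_trans (Set.indicator_le_self _ _ x) (heaple k x)
    have hint : ∫⁻ x, (Cn n).indicator (eap k) x ∂Q = ∑ i, ci i * Q (Ai i) := by
      rw [MeasureTheory.lintegral_congr (fun x => (hsum x).symm),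
        MeasureTheory.lintegral_finset_sum]
      · refine Finset.sum_congr rfl fun i _ => ?_
        rw [MeasureTheory.lintegral_indicator_const (hmeasC (hAiC i))]
      · exact fun i _ => measurable_const.indicator (hmeasC (hAiC i))
    have hQμ : ∀ i, Q (Ai i) = μ (Ai i) := fun i =>
      hQ _ (hAiC i) ((Set.inter_subset_right).trans (hCnU n))
    rw [hint]
    simp_rw [hQμ]
    exact le_iSup_of_le m0 (le_iSup_of_le ci (le_iSup_of_le Ai (le_iSup_of_le hAiC
      (le_iSup_of_le hle le_rfl))))

end SRbasic

namespace SRbasic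

open MeasureTheory

variable {α β : Type*} {S : Set (Set α)} {T : Set (Set β)}
  {μ : Set α → ℝ≥0∞} {ν : Set β → ℝ≥0∞}

lemma isSigmaRing_measurableSet {γ : Type*} (m : MeasurableSpace γ) :
    IsSigmaRing {A : Set γ | MeasurableSet[m] A} := by
  refine ⟨?_, fun A B hA hB => ?_, fun f hf => ?_⟩
  · exact MeasurableSet.empty
  · simp only [Set.mem_setOf_eq] at *
    exact MeasurableSet.diff hA hB
  · simp only [Set.mem_setOf_eq] at *
    exact MeasurableSet.iUnion hf

lemma genSR_mono {γ : Type*} {D D' : Set (Set γ)} (h : D ⊆ D') : genSR D ⊆ genSR D' :=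
  genSR_subset (genSR_isSigmaRing D') (h.trans (subset_genSR D'))

lemma prodSR_isSigmaRing : IsSigmaRing (prodSR S T) := genSR_isSigmaRing _

lemma rect_mem_prodSR {A : Set α} {B : Set β} (hA : A ∈ S) (hB : B ∈ T) :
    A ×ˢ B ∈ prodSR S T :=
  subset_genSR _ ⟨A, hA, B, hB, rfl⟩

lemma iUnion_prod_iUnion (a : ℕ → Set α) (b : ℕ → Set β) :
    (⋃ n, a n) ×ˢ (⋃ n, b n) = ⋃ k : ℕ, (a k.unpair.1) ×ˢ (b k.unpair.2) := by
  ext ⟨x, y⟩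
  simp only [Set.mem_prod, Set.mem_iUnion]
  constructor
  · rintro ⟨⟨n, hn⟩, ⟨m, hm⟩⟩
    exact ⟨Nat.pair n m, by rw [Nat.unpair_pair]; exact ⟨hn, hm⟩⟩
  · rintro ⟨k, hk, hk2⟩
    exact ⟨⟨_, hk⟩, ⟨_, hk2⟩⟩

lemma sigmaFin_rect_mem {A : Set α} {B : Set β} (hA : A ∈ sigmaFin S μ)
    (hB : B ∈ sigmaFin T ν) : A ×ˢ B ∈ prodSR S T := by
  obtain ⟨g, hg, rfl⟩ := hA
  obtain ⟨h, hh, rfl⟩ := hB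
  rw [iUnion_prod_iUnion]
  exact (genSR_isSigmaRing _).2.2 _ fun k => rect_mem_prodSR ((hg _).1) ((hh _).1)

lemma prodSR_sigmaFin_subset : prodSR (sigmaFin S μ) (sigmaFin T ν) ⊆ prodSR S T :=
  genSR_subset (genSR_isSigmaRing _) (by
    rintro R ⟨A, hA, B, hB, rfl⟩
    exact sigmaFin_rect_mem hA hB)

/-- extraction of a rectangle cover from membership in the σ-finite product σ-ring -/
lemma cover_of_mem_prodSR_sigmaFin (hS : IsSigmaRing S) (hT : IsSigmaRing T)
    (hμ : IsMeasure S μ) (hν : IsMeasure T ν)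
    {E : Set (α × β)} (hE : E ∈ prodSR (sigmaFin S μ) (sigmaFin T ν)) :
    ∃ (a : ℕ → Set α) (b : ℕ → Set β),
      (∀ n, a n ∈ S ∧ μ (a n) < ⊤) ∧ (∀ n, b n ∈ T ∧ ν (b n) < ⊤) ∧
      E ⊆ (⋃ n, a n) ×ˢ (⋃ n, b n) := by
  obtain ⟨u, hu, hsub⟩ := genSR_cover hE
  have key : ∀ n, ∃ (a : ℕ → Set α) (b : ℕ → Set β),
      (∀ m, a m ∈ S ∧ μ (a m) < ⊤) ∧ (∀ m, b m ∈ T ∧ ν (b m) < ⊤) ∧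
      u n ⊆ (⋃ m, a m) ×ˢ (⋃ m, b m) := by
    intro n
    rcases hu n with h | h
    · obtain ⟨A, hA, B, hB, hR⟩ := h
      obtain ⟨g, hg, rfl⟩ := hA
      obtain ⟨h', hh', rfl⟩ := hB
      exact ⟨g, h', hg, hh', by rw [hR]⟩
    · refine ⟨fun _ => ∅, fun _ => ∅, ?_, ?_, ?_⟩
      · intro m
        exact ⟨hS.1, by simp [hμ.1]⟩
      · intro m
        exact ⟨hT.1, by simp [hν.1]⟩
      · simp [h]
  choose a b ha hb hsub2 using key
  refine ⟨fun k => a k.unpair.1 k.unpair.2, fun k => b k.unpair.1 k.unpair.2,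
    fun k => ha _ _, fun k => hb _ _, ?_⟩
  refine hsub.trans (Set.iUnion_subset fun n => (hsub2 n).trans ?_)
  refine Set.prod_mono (Set.iUnion_subset fun m => ?_) (Set.iUnion_subset fun m => ?_)
  · exact Set.subset_iUnion_of_subset (Nat.pair n m) (by rw [Nat.unpair_pair])
  · exact Set.subset_iUnion_of_subset (Nat.pair n m) (by rw [Nat.unpair_pair])

end SRbasic


namespace SRbasic
variable {α : Type*} {C : Set (Set α)} {μ : Set α → ℝ≥0∞}

lemma psups_fin (hC : IsSigmaRing C) (hμ : IsMeasure C μ) {u : ℕ → Set α}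
    (hu : ∀ n, u n ∈ C ∧ μ (u n) < ⊤) (n : ℕ) : μ (partialSups u n : Set α) < ⊤ := by
  induction n with
  | zero => simpa using (hu 0).2
  | succ k ih =>
    have hmem : ∀ m, u m ∈ C := fun m => (hu m).1
    have hps := psups_mem hC hmem k
    have : (partialSups u (k+1) : Set α) = (partialSups u k : Set α) ∪ u (k+1) := by
      exact partialSups_succ _ k
    rw [this]
    calc μ ((partialSups u k : Set α) ∪ u (k+1))
        ≤ μ ((partialSups u k : Set α) ∪ u (k+1) \ (partialSups u k : Set α)) :=
          le_of_eq (by rw [Set.union_diff_self])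
      _ = μ (partialSups u k : Set α) + μ (u (k+1) \ (partialSups u k : Set α)) :=
          meas_union2 hC hμ hps (hC.2.1 _ _ (hu (k+1)).1 hps) disjoint_sdiff_self_right
      _ ≤ μ (partialSups u k : Set α) + μ (u (k+1)) := by
          gcongr
          exact meas_mono hC hμ (hC.2.1 _ _ (hu (k+1)).1 hps) (hu (k+1)).1 Set.diff_subset
      _ < ⊤ := ENNReal.add_lt_top.2 ⟨ih, (hu (k+1)).2⟩

end SRbasic

namespace SRbasic

open MeasureTheory

variable {α β : Type*} {S : Set (Set α)} {T : Set (Set β)}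
  {μ : Set α → ℝ≥0∞} {ν : Set β → ℝ≥0∞} {lam : Set (α × β) → ℝ≥0∞}

lemma iUnion_psups {γ : Type*} (a : ℕ → Set γ) :
    (⋃ n, (partialSups a n : Set γ)) = ⋃ n, a n := by
  apply Set.Subset.antisymm
  · refine Set.iUnion_subset fun n => ?_
    have : partialSups a n ≤ ⋃ k, a k := partialSups_le a n _ (fun i _ => Set.subset_iUnion a i)
    exact this
  · exact Set.iUnion_mono fun n => le_partialSups a n

lemma lam_eq_prod (hS : IsSigmaRing S) (hT : IsSigmaRing T)
    (hμ : IsMeasure S μ) (hν : IsMeasure T ν)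
    (hlam1 : IsMeasure (prodSR S T) lam)
    (hlam2 : ∀ A ∈ S, ∀ B ∈ T, μ A < ⊤ → ν B < ⊤ → lam (A ×ˢ B) = μ A * ν B)
    {mα : MeasurableSpace α} {mβ : MeasurableSpace β}
    (hmα : genSA S ≤ mα) (hmβ : genSA T ≤ mβ)
    (Qα : Measure α) (Qβ : Measure β) [SFinite Qβ]
    {a : ℕ → Set α} {b : ℕ → Set β}
    (ha : ∀ n, a n ∈ S ∧ μ (a n) < ⊤) (hb : ∀ n, b n ∈ T ∧ ν (b n) < ⊤)
    (hQα : ∀ A' ∈ S, A' ⊆ ⋃ n, a n → Qα A' = μ A')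
    (hQβ : ∀ B' ∈ T, B' ⊆ ⋃ n, b n → Qβ B' = ν B')
    {E : Set (α × β)} (hE : E ∈ prodSR S T)
    (hEsub : E ⊆ (⋃ n, a n) ×ˢ (⋃ n, b n)) :
    lam E = Qα.prod Qβ E := by
  classical
  set A : Set α := ⋃ n, a n with hA
  set B : Set β := ⋃ n, b n with hB
  set An : ℕ → Set α := fun n => (partialSups a n : Set α) with hAn
  set Bn : ℕ → Set β := fun n => (partialSups b n : Set β) with hBn
  have hAnS : ∀ n, An n ∈ S := psups_mem hS fun n => (ha n).1
  have hBnT : ∀ n, Bn n ∈ T := psups_mem hT fun n => (hb n).1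
  have hAnfin : ∀ n, μ (An n) < ⊤ := by
    intro n
    induction n with
    | zero => simpa [hAn] using (ha 0).2
    | succ k ih =>
      have : An (k+1) = An k ∪ a (k+1) := by rw [hAn]; exact partialSups_succ _ k
      rw [this]
      calc μ (An k ∪ a (k+1)) ≤ μ (An k ∪ a (k+1) \ An k) := le_of_eq (by rw [Set.union_diff_self])
        _ = μ (An k) + μ (a (k+1) \ An k) :=
            meas_union2 hS hμ (hAnS k) (hS.2.1 _ _ (ha (k+1)).1 (hAnS k)) disjoint_sdiff_self_right
        _ ≤ μ (An k) + μ (a (k+1)) := by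
            gcongr
            exact meas_mono hS hμ (hS.2.1 _ _ (ha (k+1)).1 (hAnS k)) (ha (k+1)).1 Set.diff_subset
        _ < ⊤ := ENNReal.add_lt_top.2 ⟨ih, (ha (k+1)).2⟩
  have hBnfin : ∀ n, ν (Bn n) < ⊤ := by
    intro n
    induction n with
    | zero => simpa [hBn] using (hb 0).2
    | succ k ih =>
      have : Bn (k+1) = Bn k ∪ b (k+1) := by rw [hBn]; exact partialSups_succ _ k
      rw [this]
      calc ν (Bn k ∪ b (k+1)) ≤ ν (Bn k ∪ b (k+1) \ Bn k) := le_of_eq (by rw [Set.union_diff_self])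
        _ = ν (Bn k) + ν (b (k+1) \ Bn k) :=
            meas_union2 hT hν (hBnT k) (hT.2.1 _ _ (hb (k+1)).1 (hBnT k)) disjoint_sdiff_self_right
        _ ≤ ν (Bn k) + ν (b (k+1)) := by
            gcongr
            exact meas_mono hT hν (hT.2.1 _ _ (hb (k+1)).1 (hBnT k)) (hb (k+1)).1 Set.diff_subset
        _ < ⊤ := ENNReal.add_lt_top.2 ⟨ih, (hb (k+1)).2⟩
  have hAnsub : ∀ n, An n ⊆ A := fun n => by
    rw [hA, ← iUnion_psups a]; exact Set.subset_iUnion (fun k => (partialSups a k : Set α)) n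
  have hBnsub : ∀ n, Bn n ⊆ B := fun n => by
    rw [hB, ← iUnion_psups b]; exact Set.subset_iUnion (fun k => (partialSups b k : Set β)) n
  have hAnmono : Monotone An := fun i j hij => (partialSups a).monotone hij
  have hBnmono : Monotone Bn := fun i j hij => (partialSups b).monotone hij
  set Cn : ℕ → Set (α × β) := fun n => (An n) ×ˢ (Bn n) with hCn
  have hCnmono : Monotone Cn := fun i j hij => Set.prod_mono (hAnmono hij) (hBnmono hij)
  have hCnprod : ∀ n, Cn n ∈ prodSR S T := fun n => rect_mem_prodSR (hAnS n) (hBnT n)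
  have hCnunion : (⋃ n, Cn n) = A ×ˢ B := by
    apply Set.Subset.antisymm
    · exact Set.iUnion_subset fun n => Set.prod_mono (hAnsub n) (hBnsub n)
    · rintro ⟨x, y⟩ ⟨hx, hy⟩
      obtain ⟨i, hi⟩ := Set.mem_iUnion.1 hx
      obtain ⟨j, hj⟩ := Set.mem_iUnion.1 hy
      refine Set.mem_iUnion.2 ⟨max i j, ?_, ?_⟩
      · exact hAnmono (le_max_left i j) (le_partialSups a i hi)
      · exact hBnmono (le_max_right i j) (le_partialSups b j hj)
  -- the π-system of finite rectangles inside A ×ˢ B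
  set p : Set (Set (α × β)) := {R | ∃ A' ∈ S, ∃ B' ∈ T,
      μ A' < ⊤ ∧ ν B' < ⊤ ∧ A' ⊆ A ∧ B' ⊆ B ∧ R = A' ×ˢ B'} with hp
  have hpi : IsPiSystem p := by
    rintro R1 ⟨A1, hA1, B1, hB1, hf1, hg1, hs1, ht1, rfl⟩
      R2 ⟨A2, hA2, B2, hB2, hf2, hg2, hs2, ht2, rfl⟩ -
    refine ⟨A1 ∩ A2, inter2 hS hA1 hA2, B1 ∩ B2, inter2 hT hB1 hB2, ?_, ?_, ?_, ?_, ?_⟩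
    · exact lt_of_le_of_lt (meas_mono hS hμ (inter2 hS hA1 hA2) hA1 Set.inter_subset_left) hf1
    · exact lt_of_le_of_lt (meas_mono hT hν (inter2 hT hB1 hB2) hB1 Set.inter_subset_left) hg1
    · exact Set.inter_subset_left.trans hs1
    · exact Set.inter_subset_left.trans ht1
    · exact Set.prod_inter_prod
  -- Step A : E ∈ genSR p
  have stepA : E ∈ genSR p := by
    have hK : prodSR S T ⊆ {F | F ∩ (A ×ˢ B) ∈ genSR p} := by
      refine genSR_subset ⟨?_, ?_, ?_⟩ ?_
      · simpa using (genSR_isSigmaRing p).1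
      · intro F G hF hG
        have : (F \ G) ∩ (A ×ˢ B) = (F ∩ (A ×ˢ B)) \ (G ∩ (A ×ˢ B)) := by
          ext z; simp only [Set.mem_inter_iff, Set.mem_diff]; tauto
        rw [Set.mem_setOf_eq, this]
        exact (genSR_isSigmaRing p).2.1 _ _ hF hG
      · intro f hf
        rw [Set.mem_setOf_eq, Set.iUnion_inter]
        exact (genSR_isSigmaRing p).2.2 _ hf
      · rintro R ⟨A', hA', B', hB', rfl⟩
        rw [Set.mem_setOf_eq, Set.prod_inter_prod]
        have : (A' ∩ A) ×ˢ (B' ∩ B) = ⋃ n, (A' ∩ An n) ×ˢ (B' ∩ Bn n) := by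
          apply Set.Subset.antisymm
          · rintro ⟨x, y⟩ ⟨⟨hx1, hx2⟩, ⟨hy1, hy2⟩⟩
            rw [hA, ← iUnion_psups a] at hx2
            rw [hB, ← iUnion_psups b] at hy2
            obtain ⟨i, hi⟩ := Set.mem_iUnion.1 hx2
            obtain ⟨j, hj⟩ := Set.mem_iUnion.1 hy2
            exact Set.mem_iUnion.2 ⟨max i j, ⟨hx1, hAnmono (le_max_left i j) hi⟩,
              ⟨hy1, hBnmono (le_max_right i j) hj⟩⟩
          · exact Set.iUnion_subset fun n => Set.prod_mono
              (Set.inter_subset_inter_right _ (hAnsub n))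
              (Set.inter_subset_inter_right _ (hBnsub n))
        rw [this]
        refine (genSR_isSigmaRing p).2.2 _ fun n => subset_genSR p ?_
        refine ⟨A' ∩ An n, inter2 hS hA' (hAnS n), B' ∩ Bn n, inter2 hT hB' (hBnT n),
          ?_, ?_, Set.inter_subset_right.trans (hAnsub n),
          Set.inter_subset_right.trans (hBnsub n), rfl⟩
        · exact lt_of_le_of_lt (meas_mono hS hμ (inter2 hS hA' (hAnS n)) (hAnS n)
            Set.inter_subset_right) (hAnfin n)
        · exact lt_of_le_of_lt (meas_mono hT hν (inter2 hT hB' (hBnT n)) (hBnT n)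
            Set.inter_subset_right) (hBnfin n)
    have := hK hE
    rwa [Set.mem_setOf_eq, Set.inter_eq_self_of_subset_left hEsub] at this
  -- ambient measurability of p-sets
  have hgenle : MeasurableSpace.generateFrom p ≤ Prod.instMeasurableSpace := by
    refine MeasurableSpace.generateFrom_le ?_
    rintro R ⟨A', hA', B', hB', -, -, -, -, rfl⟩
    exact MeasurableSet.prod (hmα _ (MeasurableSpace.measurableSet_generateFrom hA'))
      (hmβ _ (MeasurableSpace.measurableSet_generateFrom hB'))
  have hambient : ∀ {F : Set (α × β)}, MeasurableSet[MeasurableSpace.generateFrom p] F →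
      MeasurableSet F := fun hF => hgenle _ hF
  have hCnmeas : ∀ n, MeasurableSet (Cn n) :=
    fun n => MeasurableSet.prod (hmα _ (MeasurableSpace.measurableSet_generateFrom (hAnS n)))
      (hmβ _ (MeasurableSpace.measurableSet_generateFrom (hBnT n)))
  -- values on finite sub-rectangles
  have hrectval : ∀ (A' : Set α) (B' : Set β), A' ∈ S → B' ∈ T → μ A' < ⊤ → ν B' < ⊤ →
      A' ⊆ A → B' ⊆ B → lam (A' ×ˢ B') = Qα.prod Qβ (A' ×ˢ B') := by
    intro A' B' hA' hB' hf hg hsub1 hsub2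
    rw [hlam2 A' hA' B' hB' hf hg, Measure.prod_prod, hQα A' hA' hsub1, hQβ B' hB' hsub2]
  have hCnval : ∀ n, lam (Cn n) = Qα.prod Qβ (Cn n) :=
    fun n => hrectval _ _ (hAnS n) (hBnT n) (hAnfin n) (hBnfin n) (hAnsub n) (hBnsub n)
  have hCnfin : ∀ n, Qα.prod Qβ (Cn n) < ⊤ := by
    intro n
    rw [← hCnval n, hlam2 _ (hAnS n) _ (hBnT n) (hAnfin n) (hBnfin n)]
    exact ENNReal.mul_lt_top (hAnfin n) (hBnfin n)
  -- Step B : Dynkin argument at each level n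
  have stepB : ∀ n : ℕ, ∀ F : Set (α × β), MeasurableSet[MeasurableSpace.generateFrom p] F →
      (F ∩ Cn n ∈ prodSR S T ∧ lam (F ∩ Cn n) = Qα.prod Qβ (F ∩ Cn n)) := by
    intro n
    refine MeasurableSpace.induction_on_inter (m := MeasurableSpace.generateFrom p) rfl hpi ?_ ?_ ?_ ?_
    · rw [Set.empty_inter]
      exact ⟨(genSR_isSigmaRing _).1, by rw [hlam1.1, measure_empty]⟩
    · rintro R ⟨A', hA', B', hB', hf, hg, hsub1, hsub2, rfl⟩
      have hint : (A' ×ˢ B') ∩ Cn n = (A' ∩ An n) ×ˢ (B' ∩ Bn n) := Set.prod_inter_prod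
      rw [hint]
      refine ⟨rect_mem_prodSR (inter2 hS hA' (hAnS n)) (inter2 hT hB' (hBnT n)), ?_⟩
      refine hrectval _ _ (inter2 hS hA' (hAnS n)) (inter2 hT hB' (hBnT n)) ?_ ?_
        (Set.inter_subset_left.trans hsub1) (Set.inter_subset_left.trans hsub2)
      · exact lt_of_le_of_lt (meas_mono hS hμ (inter2 hS hA' (hAnS n)) hA' Set.inter_subset_left) hf
      · exact lt_of_le_of_lt (meas_mono hT hν (inter2 hT hB' (hBnT n)) hB' Set.inter_subset_left) hg
    · rintro F hFm ⟨hmem, heq⟩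
      have hsplit : Fᶜ ∩ Cn n = Cn n \ (F ∩ Cn n) := by
        ext z; simp only [Set.mem_inter_iff, Set.mem_compl_iff, Set.mem_diff]; tauto
      have hmem' : Fᶜ ∩ Cn n ∈ prodSR S T := by
        rw [hsplit]; exact (genSR_isSigmaRing _).2.1 _ _ (hCnprod n) hmem
      refine ⟨hmem', ?_⟩
      have hup : (F ∩ Cn n) ∪ (Fᶜ ∩ Cn n) = Cn n := by
        ext z; simp only [Set.mem_union, Set.mem_inter_iff, Set.mem_compl_iff]; tauto
      have hdisj : Disjoint (F ∩ Cn n) (Fᶜ ∩ Cn n) :=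
        Set.disjoint_left.2 fun z hz hz' => hz'.1 hz.1
      have hlamsum : lam (Cn n) = lam (F ∩ Cn n) + lam (Fᶜ ∩ Cn n) := by
        conv_lhs => rw [← hup]
        exact meas_union2 (genSR_isSigmaRing _) hlam1 hmem hmem' hdisj
      have hmeas2 : MeasurableSet (Fᶜ ∩ Cn n) := by
        rw [hsplit]
        exact (hCnmeas n).diff ((hambient hFm).inter (hCnmeas n))
      have hPsum : Qα.prod Qβ (Cn n) = Qα.prod Qβ (F ∩ Cn n) + Qα.prod Qβ (Fᶜ ∩ Cn n) := by
        conv_lhs => rw [← hup]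
        exact measure_union hdisj hmeas2
      have hfin : Qα.prod Qβ (F ∩ Cn n) ≠ ⊤ :=
        (lt_of_le_of_lt (measure_mono Set.inter_subset_right) (hCnfin n)).ne
      have hkey : Qα.prod Qβ (F ∩ Cn n) + Qα.prod Qβ (Fᶜ ∩ Cn n)
          = Qα.prod Qβ (F ∩ Cn n) + lam (Fᶜ ∩ Cn n) := by
        rw [← hPsum, ← hCnval n, hlamsum, heq]
      exact ((ENNReal.add_right_inj hfin).1 hkey).symm
    · rintro f hdisj hFm hmem
      rw [Set.iUnion_inter]
      have hpair : Pairwise (Function.onFun Disjoint fun i => f i ∩ Cn n) := by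
        intro i j hij
        exact (hdisj hij).mono Set.inter_subset_left Set.inter_subset_left
      refine ⟨(genSR_isSigmaRing _).2.2 _ fun i => (hmem i).1, ?_⟩
      rw [hlam1.2 _ (fun i => (hmem i).1) hpair,
        measure_iUnion hpair (fun i => (hambient (hFm i)).inter ?_)]
      · exact tsum_congr fun i => (hmem i).2
      · exact MeasurableSet.prod (hmα _ (MeasurableSpace.measurableSet_generateFrom (hAnS n)))
          (hmβ _ (MeasurableSpace.measurableSet_generateFrom (hBnT n)))
  -- Step C : pass to the limit
  have hEmeas : MeasurableSet[MeasurableSpace.generateFrom p] E := genSR_subset_genSA stepA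
  have hEn := fun n => stepB n E hEmeas
  have hEunion : (⋃ n, E ∩ Cn n) = E := by
    apply Set.Subset.antisymm (Set.iUnion_subset fun n => Set.inter_subset_left)
    intro z hz
    have : z ∈ A ×ˢ B := hEsub hz
    rw [← hCnunion] at this
    obtain ⟨n, hn⟩ := Set.mem_iUnion.1 this
    exact Set.mem_iUnion.2 ⟨n, hz, hn⟩
  have hlamlim : lam E = ⨆ n, lam (E ∩ Cn n) := by
    conv_lhs => rw [← hEunion]
    exact meas_cts_below (genSR_isSigmaRing _) hlam1 (fun n => (hEn n).1)
      (fun i j hij => Set.inter_subset_inter_right E (hCnmono hij))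
  have hPlim : Qα.prod Qβ E = ⨆ n, Qα.prod Qβ (E ∩ Cn n) := by
    conv_lhs => rw [← hEunion]
    have hmono2 : Monotone fun n => E ∩ Cn n :=
      fun i j hij => Set.inter_subset_inter_right E (hCnmono hij)
    exact Directed.measure_iUnion hmono2.directed_le
  rw [hlamlim, hPlim]
  exact iSup_congr fun n => (hEn n).2

end SRbasic

/-- Tonelli: for a nonnegative `𝔖^σ ⊗ 𝔗^σ`-measurable function,
the integral with respect to the product measure equals both iterated integrals,
and finiteness of any of the three implies integrability. -/
theorem stmt_18 {α β : Type*} (S : Set (Set α)) (T : Set (Set β))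
    (μ : Set α → ℝ≥0∞) (ν : Set β → ℝ≥0∞)
    (hS : IsSigmaRing S) (hT : IsSigmaRing T)
    (hμ : IsMeasure S μ) (hν : IsMeasure T ν)
    (lam : Set (α × β) → ℝ≥0∞) (hlam : IsProdMeasure S T μ ν lam)
    (f : α × β → ℝ≥0∞)
    (hfm : @Measurable (α × β) ℝ≥0∞ (genSA (prodSR (sigmaFin S μ) (sigmaFin T ν))) _ f)
    (hfs : {x | f x ≠ 0} ∈ prodSR (sigmaFin S μ) (sigmaFin T ν)) :
    lintSR (prodSR S T) lam f =
      lintSR S μ (fun s => lintSR T ν (fun t => f (s, t))) ∧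
    lintSR (prodSR S T) lam f =
      lintSR T ν (fun t => lintSR S μ (fun s => f (s, t))) ∧
    ((lintSR (prodSR S T) lam f < ⊤ ∨
        lintSR S μ (fun s => lintSR T ν (fun t => f (s, t))) < ⊤ ∨
        lintSR T ν (fun t => lintSR S μ (fun s => f (s, t))) < ⊤) →
      lintSR (prodSR S T) lam f < ⊤) := by
  classical
  letI mS : MeasurableSpace α := genSA S
  letI mT : MeasurableSpace β := genSA T
  have hSR := SRbasic.genSR_isSigmaRing {R | ∃ A ∈ S, ∃ B ∈ T, R = A ×ˢ B}
  have hSRst : IsSigmaRing (prodSR S T) := hSR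
  -- covers of the support
  obtain ⟨a, b, ha, hb, hcov⟩ :=
    SRbasic.cover_of_mem_prodSR_sigmaFin hS hT hμ hν hfs
  set A : Set α := ⋃ n, a n with hA
  set B : Set β := ⋃ n, b n with hB
  have hAmeas : MeasurableSet[mS] A :=
    MeasurableSet.iUnion fun n => MeasurableSpace.measurableSet_generateFrom (ha n).1
  have hBmeas : MeasurableSet[mT] B :=
    MeasurableSet.iUnion fun n => MeasurableSpace.measurableSet_generateFrom (hb n).1
  set Qa : Measure α := (SRbasic.srMeasure S μ hS hμ).restrict A with hQa
  set Qb : Measure β := (SRbasic.srMeasure T ν hT hν).restrict B with hQb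
  -- σ-finiteness of the restricted measures
  haveI hsfa : SigmaFinite Qa := by
    refine ⟨⟨⟨fun n => (partialSups a n : Set α) ∪ Aᶜ, fun _ => trivial, ?_, ?_⟩⟩⟩
    · intro n
      have h1 : Qa ((partialSups a n : Set α) ∪ Aᶜ)
          ≤ Qa (partialSups a n : Set α) + Qa Aᶜ := measure_union_le _ _
      have h2 : Qa Aᶜ = 0 := by
        rw [hQa, Measure.restrict_apply hAmeas.compl]
        simp
      have h3 : Qa (partialSups a n : Set α) ≤ μ (partialSups a n : Set α) := by
        rw [hQa, Measure.restrict_apply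
          (SRbasic.genSR_subset_genSA ((SRbasic.subset_genSR S) (SRbasic.psups_mem hS (fun m => (ha m).1) n)))]
        calc (SRbasic.srMeasure S μ hS hμ) ((partialSups a n : Set α) ∩ A)
            ≤ (SRbasic.srMeasure S μ hS hμ) (partialSups a n : Set α) :=
              measure_mono Set.inter_subset_left
          _ = μ (partialSups a n : Set α) :=
              SRbasic.srMeasure_eq hS hμ (SRbasic.psups_mem hS (fun m => (ha m).1) n)
      calc Qa ((partialSups a n : Set α) ∪ Aᶜ)
          ≤ Qa (partialSups a n : Set α) + Qa Aᶜ := h1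
        _ = Qa (partialSups a n : Set α) := by rw [h2, add_zero]
        _ ≤ μ (partialSups a n : Set α) := h3
        _ < ⊤ := SRbasic.psups_fin hS hμ ha n
    · apply Set.eq_univ_of_forall
      intro x
      rcases Classical.em (x ∈ A) with hx | hx
      · obtain ⟨n, hn⟩ := Set.mem_iUnion.1 hx
        exact Set.mem_iUnion.2 ⟨n, Or.inl (le_partialSups a n hn)⟩
      · exact Set.mem_iUnion.2 ⟨0, Or.inr hx⟩
  haveI hsfb : SigmaFinite Qb := by
    refine ⟨⟨⟨fun n => (partialSups b n : Set β) ∪ Bᶜ, fun _ => trivial, ?_, ?_⟩⟩⟩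
    · intro n
      have h1 : Qb ((partialSups b n : Set β) ∪ Bᶜ)
          ≤ Qb (partialSups b n : Set β) + Qb Bᶜ := measure_union_le _ _
      have h2 : Qb Bᶜ = 0 := by
        rw [hQb, Measure.restrict_apply hBmeas.compl]
        simp
      have h3 : Qb (partialSups b n : Set β) ≤ ν (partialSups b n : Set β) := by
        rw [hQb, Measure.restrict_apply
          (SRbasic.genSR_subset_genSA ((SRbasic.subset_genSR T) (SRbasic.psups_mem hT (fun m => (hb m).1) n)))]
        calc (SRbasic.srMeasure T ν hT hν) ((partialSups b n : Set β) ∩ B)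
            ≤ (SRbasic.srMeasure T ν hT hν) (partialSups b n : Set β) :=
              measure_mono Set.inter_subset_left
          _ = ν (partialSups b n : Set β) :=
              SRbasic.srMeasure_eq hT hν (SRbasic.psups_mem hT (fun m => (hb m).1) n)
      calc Qb ((partialSups b n : Set β) ∪ Bᶜ)
          ≤ Qb (partialSups b n : Set β) + Qb Bᶜ := h1
        _ = Qb (partialSups b n : Set β) := by rw [h2, add_zero]
        _ ≤ ν (partialSups b n : Set β) := h3
        _ < ⊤ := SRbasic.psups_fin hT hν hb n
    · apply Set.eq_univ_of_forall
      intro y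
      rcases Classical.em (y ∈ B) with hy | hy
      · obtain ⟨n, hn⟩ := Set.mem_iUnion.1 hy
        exact Set.mem_iUnion.2 ⟨n, Or.inl (le_partialSups b n hn)⟩
      · exact Set.mem_iUnion.2 ⟨0, Or.inr hy⟩
  -- values of the restricted measures on members of the σ-rings
  have hQaval : ∀ A' ∈ S, A' ⊆ A → Qa A' = μ A' := by
    intro A' hA' hsub
    rw [hQa, Measure.restrict_apply
      (SRbasic.genSR_subset_genSA ((SRbasic.subset_genSR S) hA')),
      Set.inter_eq_self_of_subset_left hsub]
    exact SRbasic.srMeasure_eq hS hμ hA'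
  have hQbval : ∀ B' ∈ T, B' ⊆ B → Qb B' = ν B' := by
    intro B' hB' hsub
    rw [hQb, Measure.restrict_apply
      (SRbasic.genSR_subset_genSA ((SRbasic.subset_genSR T) hB')),
      Set.inter_eq_self_of_subset_left hsub]
    exact SRbasic.srMeasure_eq hT hν hB'
  -- measurability of f
  have hfm1 : Measurable[genSA (prodSR S T)] f :=
    hfm.mono (MeasurableSpace.generateFrom_mono SRbasic.prodSR_sigmaFin_subset) le_rfl
  have hmle : genSA (prodSR S T) ≤ Prod.instMeasurableSpace := by
    refine MeasurableSpace.generateFrom_le fun E hE => ?_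
    exact SRbasic.genSR_subset (SRbasic.isSigmaRing_measurableSet _)
      (by
        rintro R ⟨A', hA', B', hB', rfl⟩
        exact MeasurableSet.prod (MeasurableSpace.measurableSet_generateFrom hA')
          (MeasurableSpace.measurableSet_generateFrom hB')) hE
  have hfmP : Measurable f := hfm1.mono hmle le_rfl
  -- the support is in the product σ-ring
  have hsuppmem : {x | f x ≠ 0} ∈ prodSR S T := SRbasic.prodSR_sigmaFin_subset hfs
  -- (I) : the product-σ-ring integral equals the integral for Qa.prod Qb
  have eqI : lintSR (prodSR S T) lam f = ∫⁻ x, f x ∂(Qa.prod Qb) := by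
    refine SRbasic.lintSR_eq_lintegral hSRst hlam.1 hmle (Qa.prod Qb)
      (u := fun _ => {x | f x ≠ 0}) (fun _ => hsuppmem) ?_ hfm1 ?_
    · intro E hE hEsub
      refine (SRbasic.lam_eq_prod hS hT hμ hν hlam.1 hlam.2.1 le_rfl le_rfl Qa Qb
        ha hb hQaval hQbval hE ?_).symm
      exact (hEsub.trans (Set.iUnion_subset fun _ => Set.Subset.rfl)).trans hcov
    · exact Set.subset_iUnion (fun _ : ℕ => {x | f x ≠ 0}) 0
  -- (II) : inner integral in t
  have eqII : ∀ s : α, lintSR T ν (fun t => f (s, t)) = ∫⁻ t, f (s, t) ∂Qb := by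
    intro s
    refine SRbasic.lintSR_eq_lintegral hT hν le_rfl Qb (u := b) (fun n => (hb n).1) ?_ ?_ ?_
    · intro E hE hEsub
      exact hQbval E hE hEsub
    · exact hfmP.comp measurable_prodMk_left
    · intro t ht
      exact (hcov ht).2
  -- (III) : outer integral in s
  have eqIII : lintSR S μ (fun s => ∫⁻ t, f (s, t) ∂Qb) = ∫⁻ s, (∫⁻ t, f (s, t) ∂Qb) ∂Qa := by
    refine SRbasic.lintSR_eq_lintegral hS hμ le_rfl Qa (u := a) (fun n => (ha n).1) ?_ ?_ ?_
    · intro E hE hEsub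
      exact hQaval E hE hEsub
    · exact hfmP.lintegral_prod_right'
    · intro s hs
      simp only [Set.mem_setOf_eq] at hs
      by_contra hsA
      apply hs
      have : ∀ t, f (s, t) = 0 := by
        intro t
        by_contra hft
        exact hsA (hcov hft).1
      simp [this]
  -- (II') : inner integral in s
  have eqII' : ∀ t : β, lintSR S μ (fun s => f (s, t)) = ∫⁻ s, f (s, t) ∂Qa := by
    intro t
    refine SRbasic.lintSR_eq_lintegral hS hμ le_rfl Qa (u := a) (fun n => (ha n).1) ?_ ?_ ?_
    · intro E hE hEsub
      exact hQaval E hE hEsub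
    · exact hfmP.comp measurable_prodMk_right
    · intro s hs
      exact (hcov hs).1
  -- (III') : outer integral in t
  have eqIII' : lintSR T ν (fun t => ∫⁻ s, f (s, t) ∂Qa) = ∫⁻ t, (∫⁻ s, f (s, t) ∂Qa) ∂Qb := by
    refine SRbasic.lintSR_eq_lintegral hT hν le_rfl Qb (u := b) (fun n => (hb n).1) ?_ ?_ ?_
    · intro E hE hEsub
      exact hQbval E hE hEsub
    · exact hfmP.lintegral_prod_left'
    · intro t ht
      simp only [Set.mem_setOf_eq] at ht
      by_contra htB
      apply ht
      have : ∀ s, f (s, t) = 0 := by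
        intro s
        by_contra hft
        exact htB (hcov hft).2
      simp [this]
  -- Tonelli for the mathlib product measure
  have tonelli1 : ∫⁻ x, f x ∂(Qa.prod Qb) = ∫⁻ s, (∫⁻ t, f (s, t) ∂Qb) ∂Qa :=
    MeasureTheory.lintegral_prod f hfmP.aemeasurable
  have tonelli2 : ∫⁻ x, f x ∂(Qa.prod Qb) = ∫⁻ t, (∫⁻ s, f (s, t) ∂Qa) ∂Qb :=
    MeasureTheory.lintegral_prod_symm f hfmP.aemeasurable
  have main1 : lintSR (prodSR S T) lam f =
      lintSR S μ (fun s => lintSR T ν (fun t => f (s, t))) := by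
    have : (fun s => lintSR T ν (fun t => f (s, t))) = fun s => ∫⁻ t, f (s, t) ∂Qb :=
      funext fun s => eqII s
    rw [this, eqIII, eqI, tonelli1]
  have main2 : lintSR (prodSR S T) lam f =
      lintSR T ν (fun t => lintSR S μ (fun s => f (s, t))) := by
    have : (fun t => lintSR S μ (fun s => f (s, t))) = fun t => ∫⁻ s, f (s, t) ∂Qa :=
      funext fun t => eqII' t
    rw [this, eqIII', eqI, tonelli2]
  refine ⟨main1, main2, ?_⟩
  rintro (h | h | h)
  · exact h
  · rwa [main1]
  · rwa [main2]
end
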